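/- In every allocation instance with monotone valuations there exists a partial allocation A_1,...,A_n (pairwise disjoint bundles, not necessarily covering all items) that is simultaneously RMMS (v_i(A_i) ≥ RMMS(M, v_i, n) for all i) and EFX (no agent i and item e ∈ A_j satisfy v_i(A_i) < v_i(A_j \ {e})). -/

import Mathlib

open Finset

/-- `P` is a partition of the finite set `X` into `n` (possibly empty) parts. -/
def IsPartitionOn {M : Type*} [DecidableEq M] {n : ℕ} (X : Finset M) (P : Fin n → Finset M) : Prop :=
  (∀ i j, i ≠ j → Disjoint (P i) (P j)) ∧ Finset.univ.biUnion P = X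

/-- `t` is residual self-feasible for valuation `v` on the item set `X` with `n` agents:
for every `0 ≤ k < n`, after removing any `k` pairwise disjoint bundles of `X`, each of
`v`-value strictly less than `t`, the remaining items admit an `(n-k)`-partition in which
every part has `v`-value at least `t`. -/
def RSF {M : Type*} [DecidableEq M] {α : Type*} [Preorder α] (v : Finset M → α) (n : ℕ)
    (X : Finset M) (t : α) : Prop :=
  ∀ k, k < n → ∀ B : Fin k → Finset M,
    (∀ i j, i ≠ j → Disjoint (B i) (B j)) → (∀ i, B i ⊆ X) → (∀ i, v (B i) < t) →
    ∃ P : Fin (n - k) → Finset M,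
      (∀ i j, i ≠ j → Disjoint (P i) (P j)) ∧
      Finset.univ.biUnion P = X \ Finset.univ.biUnion B ∧
      ∀ i, t ≤ v (P i)

open scoped Classical

theorem exists_minimal_old {α : Type*} [Preorder α] (s : Finset α) (h : s.Nonempty) :
    ∃ m ∈ s, ∀ x ∈ s, ¬x < m := by
  obtain ⟨m, hm⟩ := Finset.exists_minimal h
  exact ⟨m, hm.1, fun x hx hlt => hlt.not_ge (hm.2 hx hlt.le)⟩

/-- Envy-free matching lemma: in a bipartite graph between `Agents` and `Parts` with
`Parts.card = Agents.card`, if every part has at least one adjacent agent, then there is a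
nonempty partial matching `σ` on `T ⊆ Agents` such that no agent outside `T` is adjacent
to any matched part. -/
theorem envy_free_matching {α β : Type*} [DecidableEq α] [DecidableEq β]
    (E : α → β → Prop) :
    ∀ (Parts : Finset β) (Agents : Finset α),
    Parts.card = Agents.card → Parts.Nonempty →
    (∀ b ∈ Parts, ∃ a ∈ Agents, E a b) →
    ∃ (T : Finset α) (σ : α → β), T.Nonempty ∧ T ⊆ Agents ∧
      (∀ a ∈ T, σ a ∈ Parts) ∧ Set.InjOn σ T ∧ (∀ a ∈ T, E a (σ a)) ∧
      (∀ a ∈ Agents, a ∉ T → ∀ t ∈ T, ¬ E a (σ t)) := by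
  classical
  intro Parts
  induction Parts using Finset.strongInduction with
  | _ Parts IH =>
  intro Agents hcard hne hedge
  set N : Finset β → Finset α := fun Q => Q.biUnion (fun b => Agents.filter (fun a => E a b))
    with hN
  by_cases hHall : ∀ Q ⊆ Parts, Q.card ≤ (N Q).card
  · -- Hall's condition holds: perfect matching of parts into agents, T = Agents
    have hHall' : ∀ s : Finset {b // b ∈ Parts},
        s.card ≤ (s.biUnion (fun b => Agents.filter (fun a => E a b.1))).card := by
      intro s
      have h1 : (s.image Subtype.val).card = s.card :=
        Finset.card_image_of_injective s Subtype.val_injective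
      have h2 : (s.image Subtype.val) ⊆ Parts := by
        intro b hb
        obtain ⟨⟨b', hb'⟩, _, rfl⟩ := Finset.mem_image.1 hb
        exact hb'
      have h3 : N (s.image Subtype.val) = s.biUnion (fun b => Agents.filter (fun a => E a b.1)) := by
        ext a
        simp only [hN, Finset.mem_biUnion, Finset.mem_image, Finset.mem_filter]
        constructor
        · rintro ⟨b, ⟨⟨b', hb'⟩, hbs, rfl⟩, ha⟩
          exact ⟨⟨b', hb'⟩, hbs, ha⟩
        · rintro ⟨⟨b', hb'⟩, hbs, ha⟩
          exact ⟨b', ⟨⟨b', hb'⟩, hbs, rfl⟩, ha⟩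
      calc s.card = (s.image Subtype.val).card := h1.symm
        _ ≤ (N (s.image Subtype.val)).card := hHall _ h2
        _ = _ := by rw [h3]
    obtain ⟨f, hfinj, hfmem⟩ :=
      (Finset.all_card_le_biUnion_card_iff_exists_injective
        (fun b : {b // b ∈ Parts} => Agents.filter (fun a => E a b.1))).1 hHall'
    set T : Finset α := Parts.attach.image f with hT
    have hTsub : T ⊆ Agents := by
      intro a ha
      obtain ⟨b, _, rfl⟩ := Finset.mem_image.1 ha
      exact (Finset.mem_filter.1 (hfmem b)).1
    have hTcard : T.card = Agents.card := by
      rw [hT, Finset.card_image_of_injective _ hfinj, Finset.card_attach, hcard]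
    have hTA : T = Agents := Finset.eq_of_subset_of_card_le hTsub (by rw [hTcard])
    -- define σ as inverse of f
    have hsigma : ∀ a ∈ T, ∃ b : {b // b ∈ Parts}, f b = a := by
      intro a ha
      obtain ⟨b, _, rfl⟩ := Finset.mem_image.1 ha
      exact ⟨b, rfl⟩
    set σ : α → β := fun a => if h : ∃ b : {b // b ∈ Parts}, f b = a
      then (Classical.choose h).1 else hne.choose with hσ
    refine ⟨T, σ, ?_, hTsub, ?_, ?_, ?_, ?_⟩
    · rw [hTA]
      rw [← Finset.card_pos, ← hcard, Finset.card_pos]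
      exact hne
    · intro a ha
      have h := hsigma a ha
      simp only [hσ, dif_pos h]
      exact (Classical.choose h).2
    · intro a ha a' ha' heq
      have h := hsigma a (by simpa using ha)
      have h' := hsigma a' (by simpa using ha')
      simp only [hσ, dif_pos h, dif_pos h'] at heq
      have : Classical.choose h = Classical.choose h' := Subtype.ext heq
      rw [← Classical.choose_spec h, ← Classical.choose_spec h', this]
    · intro a ha
      have h := hsigma a ha
      simp only [hσ, dif_pos h]
      have hspec := Classical.choose_spec h
      have := hfmem (Classical.choose h)
      rw [hspec] at this
      exact (Finset.mem_filter.1 this).2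
    · intro a haA ha t _ _
      exact ha (hTA ▸ haA)
  · -- Hall fails: find minimal violating Q, recurse
    push_neg at hHall
    obtain ⟨Q₀, hQ₀sub, hQ₀⟩ := hHall
    have hfam : (Parts.powerset.filter (fun Q => (N Q).card < Q.card)).Nonempty :=
      ⟨Q₀, Finset.mem_filter.2 ⟨Finset.mem_powerset.2 hQ₀sub, hQ₀⟩⟩
    obtain ⟨Q, hQmem, hQmin⟩ := exists_minimal_old _ hfam
    rw [Finset.mem_filter, Finset.mem_powerset] at hQmem
    obtain ⟨hQsub, hQviol⟩ := hQmem
    have hQne : Q.Nonempty := by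
      rw [Finset.nonempty_iff_ne_empty]
      rintro rfl
      simp at hQviol
    -- every singleton has a neighbor, so Q.card ≥ 2
    have hsingle : ∀ b ∈ Q, ∃ a, a ∈ N {b} := by
      intro b hb
      obtain ⟨a, haA, haE⟩ := hedge b (hQsub hb)
      exact ⟨a, by simp [hN, Finset.mem_filter, haA, haE]⟩
    have hQ2 : 2 ≤ Q.card := by
      by_contra h
      push_neg at h
      interval_cases hc : Q.card
      · exact absurd (Finset.card_eq_zero.1 hc) (Finset.nonempty_iff_ne_empty.1 hQne)
      · obtain ⟨b, rfl⟩ := Finset.card_eq_one.1 hc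
        obtain ⟨a, ha⟩ := hsingle b (by simp)
        have : 1 ≤ (N {b}).card := Finset.card_pos.2 ⟨a, ha⟩
        omega
    obtain ⟨b₀, hb₀⟩ := hQne
    set Q' : Finset β := Q.erase b₀ with hQ'
    have hQ'ss : Q' ⊂ Q := Finset.erase_ssubset hb₀
    have hQ'card : Q'.card = Q.card - 1 := Finset.card_erase_of_mem hb₀
    have hQ'ne : Q'.Nonempty := by
      rw [← Finset.card_pos, hQ'card]
      omega
    -- Q' is not violating (minimality)
    have hQ'ok : Q'.card ≤ (N Q').card := by
      by_contra h
      push_neg at h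
      exact hQmin Q' (Finset.mem_filter.2 ⟨Finset.mem_powerset.2 (hQ'ss.1.trans hQsub), h⟩)
        hQ'ss
    have hNmono : N Q' ⊆ N Q := Finset.biUnion_subset_biUnion_of_subset_left _ hQ'ss.1
    have hNQcard : (N Q).card = Q'.card := by
      have h1 : Q'.card ≤ (N Q).card := hQ'ok.trans (Finset.card_le_card hNmono)
      have h2 : (N Q).card ≤ Q.card - 1 := by omega
      omega
    -- recurse on (N Q, Q')
    have hedge' : ∀ b ∈ Q', ∃ a ∈ N Q, E a b := by
      intro b hb
      obtain ⟨a, haA, haE⟩ := hedge b (hQsub (hQ'ss.1 hb))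
      refine ⟨a, ?_, haE⟩
      exact Finset.mem_biUnion.2 ⟨b, hQ'ss.1 hb, Finset.mem_filter.2 ⟨haA, haE⟩⟩
    obtain ⟨T, σ, hTne, hTsub, hTparts, hTinj, hTE, hTenvy⟩ :=
      IH Q' (hQ'ss.trans_subset hQsub) (N Q) (by omega) hQ'ne hedge'
    have hNQA : N Q ⊆ Agents := by
      intro a ha
      obtain ⟨b, _, hb⟩ := Finset.mem_biUnion.1 ha
      exact (Finset.mem_filter.1 hb).1
    refine ⟨T, σ, hTne, hTsub.trans hNQA, ?_, hTinj, hTE, ?_⟩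
    · intro a ha
      exact hQsub (hQ'ss.1 (hTparts a ha))
    · intro a haA haT t ht hE
      have hσt : σ t ∈ Q := hQ'ss.1 (hTparts t ht)
      have haNQ : a ∈ N Q := Finset.mem_biUnion.2 ⟨σ t, hσt, Finset.mem_filter.2 ⟨haA, hE⟩⟩
      exact hTenvy a haNQ haT t ht hE

noncomputable def Sval {M : Type*} [Fintype M] [DecidableEq M] {n : ℕ}
    (v : Fin n → Finset M → NNReal) : Finset NNReal :=
  Finset.image (fun f : Fin n → Finset M => ∑ i, v i (f i)) Finset.univ

theorem main {M : Type*} [Fintype M] [DecidableEq M] {n : ℕ}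
    (v : Fin n → Finset M → NNReal) (r : Fin n → NNReal)
    (hRSF : ∀ i, RSF (v i) n (Finset.univ : Finset M) (r i)) :
    ∀ (m : ℕ) (R : Finset (Fin n)) (A : Fin n → Finset M),
    R.card * ((Sval v).card + 1) +
      ((Sval v).filter (fun s => (∑ i, v i (A i)) < s)).card ≤ m →
    (∀ x ∈ R, A x = ∅) →
    (∀ x ∈ R, 0 < r x) →
    (∀ i j, i ≠ j → Disjoint (A i) (A j)) →
    (∀ y, y ∉ R → r y ≤ v y (A y)) →
    (∀ y, y ∉ R → ∀ x ∈ R, v x (A y) < r x) →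
    (∀ y, y ∉ R → ∀ W, W ⊂ A y →
        (∀ x ∈ R, v x W < r x) ∧ (∀ z, z ∉ R → v z W ≤ v z (A z))) →
    ∃ B : Fin n → Finset M,
      (∀ i j, i ≠ j → Disjoint (B i) (B j)) ∧
      (∀ i, r i ≤ v i (B i)) ∧
      (∀ y, y ∉ R → v y (A y) ≤ v y (B y)) ∧
      (∀ i j, ∀ e ∈ B j, v i (B j \ {e}) ≤ v i (B i)) := by
  -- base-case helper
  have base : ∀ (R : Finset (Fin n)) (A : Fin n → Finset M), R = ∅ →
      (∀ i j, i ≠ j → Disjoint (A i) (A j)) →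
      (∀ y, y ∉ R → r y ≤ v y (A y)) →
      (∀ y, y ∉ R → ∀ W, W ⊂ A y →
        (∀ x ∈ R, v x W < r x) ∧ (∀ z, z ∉ R → v z W ≤ v z (A z))) →
      ∃ B : Fin n → Finset M,
      (∀ i j, i ≠ j → Disjoint (B i) (B j)) ∧
      (∀ i, r i ≤ v i (B i)) ∧
      (∀ y, y ∉ R → v y (A y) ≤ v y (B y)) ∧
      (∀ i j, ∀ e ∈ B j, v i (B j \ {e}) ≤ v i (B i)) := by
    intro R A hRe hdisj h4 h6
    subst hRe
    refine ⟨A, hdisj, fun i => h4 i (Finset.notMem_empty i), fun _ _ => le_rfl, ?_⟩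
    intro i j e he
    have hss : A j \ {e} ⊂ A j :=
      Finset.sdiff_ssubset (by simpa using he) (Finset.singleton_nonempty e)
    exact (h6 j (Finset.notMem_empty j) _ hss).2 i (Finset.notMem_empty i)
  intro m
  induction m with
  | zero =>
    intro R A hm h1 h2 h3 h4 h5 h6
    have hR0 : R.card * ((Sval v).card + 1) = 0 := by omega
    have hRe : R = ∅ := by
      rcases Nat.mul_eq_zero.1 hR0 with h | h
      · exact Finset.card_eq_zero.1 h
      · omega
    exact base R A hRe h3 h4 h6
  | succ m IH =>
    intro R A hm h1 h2 h3 h4 h5 h6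
    by_cases hRe : R = ∅
    · exact base R A hRe h3 h4 h6
    -- R nonempty: main step
    obtain ⟨d, hd⟩ := Finset.nonempty_iff_ne_empty.2 hRe
    have hRcard : 0 < R.card := Finset.card_pos.2 ⟨d, hd⟩
    have hRn : R.card ≤ n := by
      have := Finset.card_le_univ R
      simpa using this
    have hn0 : 0 < n := lt_of_lt_of_le hRcard hRn
    have hkn : n - R.card < n := by omega
    have hkc : (Rᶜ : Finset (Fin n)).card = n - R.card := by
      rw [Finset.card_compl]
      simp
    -- enumeration of the complement of R
    set enum : Fin (n - R.card) → Fin n :=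
      fun i => ((Rᶜ.equivFin.symm (finCongr hkc.symm i)) : Fin n) with henum
    have henumC : ∀ i, enum i ∉ R := by
      intro i
      simp only [henum]
      exact Finset.mem_compl.1 (Rᶜ.equivFin.symm (finCongr hkc.symm i)).2
    have henuminj : ∀ i j, enum i = enum j → i = j := by
      intro i j h
      have h1' : Rᶜ.equivFin.symm (finCongr hkc.symm i) =
          Rᶜ.equivFin.symm (finCongr hkc.symm j) := Subtype.ext h
      have h2' := Rᶜ.equivFin.symm.injective h1'
      exact (finCongr hkc.symm).injective h2'
    have henumsurj : ∀ y, y ∉ R → ∃ i, enum i = y := by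
      intro y hy
      refine ⟨finCongr hkc (Rᶜ.equivFin ⟨y, Finset.mem_compl.2 hy⟩), ?_⟩
      show (Rᶜ.equivFin.symm (finCongr hkc.symm (finCongr hkc (Rᶜ.equivFin ⟨y, _⟩))) : Fin n) = y
      have hc : finCongr hkc.symm (finCongr hkc (Rᶜ.equivFin ⟨y, Finset.mem_compl.2 hy⟩)) =
          Rᶜ.equivFin ⟨y, Finset.mem_compl.2 hy⟩ := by
        apply Fin.ext
        simp
      rw [hc, Equiv.symm_apply_apply]
    set Bt : Fin (n - R.card) → Finset M := fun i => A (enum i) with hBt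
    obtain ⟨P, hPdisj, hPcover, hPval⟩ :=
      hRSF d (n - R.card) hkn Bt
        (fun i j hij => h3 _ _ (fun h => hij (henuminj i j h)))
        (fun i => Finset.subset_univ _)
        (fun i => h5 (enum i) (henumC i) d hd)
    have hPX : ∀ l, P l ⊆ Finset.univ \ Finset.univ.biUnion Bt := by
      intro l
      rw [← hPcover]
      exact Finset.subset_biUnion_of_mem P (Finset.mem_univ l)
    have hPA : ∀ l, ∀ y, y ∉ R → Disjoint (P l) (A y) := by
      intro l y hy
      rw [Finset.disjoint_left]
      intro a haP haA
      obtain ⟨i, rfl⟩ := henumsurj y hy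
      have h1' := hPX l haP
      rw [Finset.mem_sdiff] at h1'
      exact h1'.2 (Finset.mem_biUnion.2 ⟨i, Finset.mem_univ i, haA⟩)
    -- minimal sets within parts
    set cond : Finset M → Prop := fun Zs =>
      (∃ x ∈ R, r x ≤ v x Zs) ∨ (∃ y, y ∉ R ∧ v y (A y) < v y Zs) with hcond
    have h𝒲ne : ∀ l, ((P l).powerset.filter cond).Nonempty := by
      intro l
      exact ⟨P l, Finset.mem_filter.2 ⟨Finset.mem_powerset_self _,
        Or.inl ⟨d, hd, hPval l⟩⟩⟩
    choose Z hZmem hZmin using fun l =>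
      exists_minimal_old ((P l).powerset.filter cond) (h𝒲ne l)
    have hZsub : ∀ l, Z l ⊆ P l := by
      intro l
      exact Finset.mem_powerset.1 (Finset.mem_filter.1 (hZmem l)).1
    have hZcond : ∀ l, cond (Z l) := fun l => (Finset.mem_filter.1 (hZmem l)).2
    have hmin : ∀ l, ∀ W, W ⊂ Z l →
        (∀ x ∈ R, v x W < r x) ∧ (∀ z, z ∉ R → v z W ≤ v z (A z)) := by
      intro l W hW
      have hWP : W ⊆ P l := hW.subset.trans (hZsub l)
      have hWnot : ¬ cond W := by
        intro hc
        exact hZmin l W (Finset.mem_filter.2 ⟨Finset.mem_powerset.2 hWP, hc⟩)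
          (Finset.lt_iff_ssubset.2 hW)
      simp only [hcond] at hWnot
      push_neg at hWnot
      exact ⟨hWnot.1, hWnot.2⟩
    by_cases hcase : ∀ l, ∃ x ∈ R, r x ≤ v x (Z l)
    · -- CASE M : matching
      have hcardP : (Finset.univ : Finset (Fin (n - (n - R.card)))).card = R.card := by
        rw [Finset.card_univ, Fintype.card_fin, Nat.sub_sub_self hRn]
      have hneP : (Finset.univ : Finset (Fin (n - (n - R.card)))).Nonempty := by
        have : 0 < n - (n - R.card) := by omega
        exact ⟨⟨0, this⟩, Finset.mem_univ _⟩
      obtain ⟨T, σ, hTne, hTsub, hTparts, hTinj, hTE, hTenvy⟩ :=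
        envy_free_matching (fun a l => r a ≤ v a (Z l)) Finset.univ R hcardP hneP
          (fun l _ => hcase l)
      set A' : Fin n → Finset M := fun i => if i ∈ T then Z (σ i) else A i with hA'
      set R' : Finset (Fin n) := R \ T with hR'
      have hR'sub : R' ⊆ R := Finset.sdiff_subset
      have hTR : ∀ x, x ∈ T → x ∈ R := fun x hx => hTsub hx
      have hnotR' : ∀ y, y ∉ R' ↔ (y ∉ R ∨ y ∈ T) := by
        intro y
        rw [hR', Finset.mem_sdiff]
        tauto
      -- invariants
      have h1' : ∀ x ∈ R', A' x = ∅ := by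
        intro x hx
        rw [Finset.mem_sdiff] at hx
        simp only [hA', if_neg hx.2]
        exact h1 x hx.1
      have h2' : ∀ x ∈ R', 0 < r x := fun x hx => h2 x (hR'sub hx)
      have hdisj' : ∀ i j, i ≠ j → Disjoint (A' i) (A' j) := by
        intro i j hij
        by_cases hi : i ∈ T <;> by_cases hj : j ∈ T <;>
          simp only [hA', if_pos, if_neg, hi, hj, if_true, if_false]
        · exact (hPdisj (σ i) (σ j) (fun h => hij (hTinj hi hj h))).mono
            (hZsub _) (hZsub _)
        · by_cases hjR : j ∈ R
          · rw [h1 j hjR]; exact Finset.disjoint_empty_right _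
          · exact ((hPA (σ i) j hjR).mono_left (hZsub _))
        · by_cases hiR : i ∈ R
          · rw [h1 i hiR]; exact Finset.disjoint_empty_left _
          · exact ((hPA (σ j) i hiR).mono_left (hZsub _)).symm
        · exact h3 i j hij
      have h4' : ∀ y, y ∉ R' → r y ≤ v y (A' y) := by
        intro y hy
        by_cases hyT : y ∈ T
        · simp only [hA', if_pos hyT]
          exact hTE y hyT
        · have hyR : y ∉ R := ((hnotR' y).1 hy).resolve_right hyT
          simp only [hA', if_neg hyT]
          exact h4 y hyR
      have h5' : ∀ y, y ∉ R' → ∀ x ∈ R', v x (A' y) < r x := by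
        intro y hy x hx
        have hxR : x ∈ R := hR'sub hx
        have hxT : x ∉ T := (Finset.mem_sdiff.1 hx).2
        by_cases hyT : y ∈ T
        · simp only [hA', if_pos hyT]
          exact lt_of_not_ge (hTenvy x hxR hxT y hyT)
        · have hyR : y ∉ R := ((hnotR' y).1 hy).resolve_right hyT
          simp only [hA', if_neg hyT]
          exact h5 y hyR x hxR
      have h6' : ∀ y, y ∉ R' → ∀ W, W ⊂ A' y →
          (∀ x ∈ R', v x W < r x) ∧ (∀ z, z ∉ R' → v z W ≤ v z (A' z)) := by
        intro y hy W hW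
        have key : (∀ x ∈ R, v x W < r x) ∧ (∀ z, z ∉ R → v z W ≤ v z (A z)) := by
          by_cases hyT : y ∈ T
          · simp only [hA', if_pos hyT] at hW
            exact hmin (σ y) W hW
          · have hyR : y ∉ R := ((hnotR' y).1 hy).resolve_right hyT
            simp only [hA', if_neg hyT] at hW
            exact h6 y hyR W hW
        refine ⟨fun x hx => key.1 x (hR'sub hx), ?_⟩
        intro z hz
        by_cases hzT : z ∈ T
        · simp only [hA', if_pos hzT]
          exact le_trans (le_of_lt (key.1 z (hTR z hzT))) (hTE z hzT)
        · have hzR : z ∉ R := ((hnotR' z).1 hz).resolve_right hzT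
          simp only [hA', if_neg hzT]
          exact key.2 z hzR
      -- measure decreases
      have hmeas' : R'.card * ((Sval v).card + 1) +
          ((Sval v).filter (fun s => (∑ i, v i (A' i)) < s)).card ≤ m := by
        have hTcard : 0 < T.card := Finset.card_pos.2 hTne
        have hTle : T.card ≤ R.card := Finset.card_le_card hTsub
        have hR'card : R'.card + 1 ≤ R.card := by
          rw [hR', Finset.card_sdiff_of_subset hTsub]
          omega
        have hfle : ((Sval v).filter (fun s => (∑ i, v i (A' i)) < s)).card ≤ (Sval v).card :=
          Finset.card_filter_le _ _
        have hold : R.card * ((Sval v).card + 1) ≤ m + 1 := le_trans (Nat.le_add_right _ _) hm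
        have : (R'.card + 1) * ((Sval v).card + 1) ≤ R.card * ((Sval v).card + 1) :=
          Nat.mul_le_mul_right _ hR'card
        nlinarith
      obtain ⟨B, hB1, hB2, hB3, hB4⟩ := IH R' A' hmeas' h1' h2' hdisj' h4' h5' h6'
      refine ⟨B, hB1, hB2, ?_, hB4⟩
      intro y hy
      have hyT : y ∉ T := fun h => hy (hTR y h)
      have hyR' : y ∉ R' := fun h => hy (hR'sub h)
      have := hB3 y hyR'
      simpa only [hA', if_neg hyT] using this
    · -- CASE U : upgrade
      push_neg at hcase
      obtain ⟨l, hl⟩ := hcase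
      have hright : ∃ y, y ∉ R ∧ v y (A y) < v y (Z l) := by
        rcases hZcond l with h | h
        · obtain ⟨x, hx, hx'⟩ := h
          exact absurd hx' (not_le.2 (hl x hx))
        · exact h
      obtain ⟨y₀, hy₀R, hy₀v⟩ := hright
      set A' : Fin n → Finset M := Function.update A y₀ (Z l) with hA'
      have hA'y₀ : A' y₀ = Z l := Function.update_self _ _ _
      have hA'ne : ∀ i, i ≠ y₀ → A' i = A i := fun i hi => Function.update_of_ne hi _ _
      have h1' : ∀ x ∈ R, A' x = ∅ := by
        intro x hx
        rw [hA'ne x (fun h => hy₀R (h ▸ hx))]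
        exact h1 x hx
      have hdisj' : ∀ i j, i ≠ j → Disjoint (A' i) (A' j) := by
        have hZdisj : ∀ j, j ≠ y₀ → Disjoint (Z l) (A j) := by
          intro j hj
          by_cases hjR : j ∈ R
          · rw [h1 j hjR]; exact Finset.disjoint_empty_right _
          · exact (hPA l j hjR).mono_left (hZsub l)
        intro i j hij
        by_cases hi : i = y₀
        · subst hi
          rw [hA'y₀, hA'ne j (Ne.symm hij)]
          exact hZdisj j (Ne.symm hij)
        · by_cases hj : j = y₀
          · subst hj
            rw [hA'y₀, hA'ne i hi]
            exact (hZdisj i hi).symm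
          · rw [hA'ne i hi, hA'ne j hj]
            exact h3 i j hij
      have h4' : ∀ y, y ∉ R → r y ≤ v y (A' y) := by
        intro y hy
        by_cases hyy : y = y₀
        · subst hyy
          rw [hA'y₀]
          exact le_trans (h4 y hy) (le_of_lt hy₀v)
        · rw [hA'ne y hyy]; exact h4 y hy
      have h5' : ∀ y, y ∉ R → ∀ x ∈ R, v x (A' y) < r x := by
        intro y hy x hx
        by_cases hyy : y = y₀
        · subst hyy
          rw [hA'y₀]
          exact hl x hx
        · rw [hA'ne y hyy]; exact h5 y hy x hx
      have h6' : ∀ y, y ∉ R → ∀ W, W ⊂ A' y →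
          (∀ x ∈ R, v x W < r x) ∧ (∀ z, z ∉ R → v z W ≤ v z (A' z)) := by
        intro y hy W hW
        have key : (∀ x ∈ R, v x W < r x) ∧ (∀ z, z ∉ R → v z W ≤ v z (A z)) := by
          by_cases hyy : y = y₀
          · subst hyy
            rw [hA'y₀] at hW
            exact hmin l W hW
          · rw [hA'ne y hyy] at hW
            exact h6 y hy W hW
        refine ⟨key.1, ?_⟩
        intro z hz
        by_cases hzz : z = y₀
        · subst hzz
          rw [hA'y₀]
          exact le_trans (key.2 z hz) (le_of_lt hy₀v)
        · rw [hA'ne z hzz]; exact key.2 z hz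
      -- measure decreases (same R, sum strictly increases)
      have hsum : (∑ i, v i (A i)) < (∑ i, v i (A' i)) := by
        have e1 : (∑ i, v i (A' i)) =
            v y₀ (Z l) + ∑ i ∈ Finset.univ \ {y₀}, v i (A i) := by
          rw [hA']
          calc (∑ i, v i (Function.update A y₀ (Z l) i))
              = v y₀ (Function.update A y₀ (Z l) y₀) +
                ∑ i ∈ Finset.univ \ {y₀}, v i (Function.update A y₀ (Z l) i) :=
                Finset.sum_eq_add_sum_sdiff_singleton_of_mem (Finset.mem_univ y₀) _
            _ = v y₀ (Z l) + ∑ i ∈ Finset.univ \ {y₀}, v i (A i) := by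
                rw [Function.update_self]
                congr 1
                apply Finset.sum_congr rfl
                intro i hi
                rw [Finset.mem_sdiff, Finset.mem_singleton] at hi
                rw [Function.update_of_ne hi.2]
        have e2 : (∑ i, v i (A i)) =
            v y₀ (A y₀) + ∑ i ∈ Finset.univ \ {y₀}, v i (A i) := by
          exact Finset.sum_eq_add_sum_sdiff_singleton_of_mem (Finset.mem_univ y₀) _
        rw [e1, e2]
        exact add_lt_add_left hy₀v _
      have hmem' : (∑ i, v i (A' i)) ∈ Sval v :=
        Finset.mem_image.2 ⟨A', Finset.mem_univ _, rfl⟩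
      have hss : (Sval v).filter (fun s => (∑ i, v i (A' i)) < s) ⊂
          (Sval v).filter (fun s => (∑ i, v i (A i)) < s) := by
        rw [Finset.ssubset_iff_of_subset]
        · exact ⟨_, Finset.mem_filter.2 ⟨hmem', hsum⟩,
            fun h => lt_irrefl _ (Finset.mem_filter.1 h).2⟩
        · intro s hs
          rw [Finset.mem_filter] at hs ⊢
          exact ⟨hs.1, lt_trans hsum hs.2⟩
      have hmeas' : R.card * ((Sval v).card + 1) +
          ((Sval v).filter (fun s => (∑ i, v i (A' i)) < s)).card ≤ m := by
        have := Finset.card_lt_card hss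
        omega
      obtain ⟨B, hB1, hB2, hB3, hB4⟩ := IH R A' hmeas' h1' h2 hdisj' h4' h5' h6'
      refine ⟨B, hB1, hB2, ?_, hB4⟩
      intro y hy
      by_cases hyy : y = y₀
      · subst hyy
        exact le_trans (le_of_lt hy₀v) (by rw [← hA'y₀]; exact hB3 y hy)
      · rw [← hA'ne y hyy]
        exact hB3 y hy

/-- In every allocation instance with monotone valuations there is a partial allocation
that is simultaneously RMMS and EFX. -/
theorem exists_partial_rmms_efx {M : Type*} [Fintype M] [DecidableEq M]
    (n : ℕ) (hn : 1 ≤ n)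
    (v : Fin n → Finset M → NNReal)
    (hmono : ∀ i, ∀ S T : Finset M, S ⊆ T → v i S ≤ v i T)
    (hzero : ∀ i, v i ∅ = 0)
    (r : Fin n → NNReal)
    (hr : ∀ i, IsGreatest {t : NNReal | RSF (v i) n (Finset.univ : Finset M) t} (r i)) :
    ∃ A : Fin n → Finset M,
      (∀ i j, i ≠ j → Disjoint (A i) (A j)) ∧
      (∀ i, r i ≤ v i (A i)) ∧
      (∀ i j, ∀ e ∈ A j, v i (A j \ {e}) ≤ v i (A i)) := by
  classical
  have hRSF : ∀ i, RSF (v i) n (Finset.univ : Finset M) (r i) := fun i => (hr i).1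
  set R₀ : Finset (Fin n) := Finset.univ.filter (fun i => 0 < r i) with hR₀
  set A₀ : Fin n → Finset M := fun _ => ∅ with hA₀
  have h1 : ∀ x ∈ R₀, A₀ x = ∅ := fun x _ => rfl
  have h2 : ∀ x ∈ R₀, 0 < r x := fun x hx => (Finset.mem_filter.1 hx).2
  have h3 : ∀ i j : Fin n, i ≠ j → Disjoint (A₀ i) (A₀ j) :=
    fun _ _ _ => Finset.disjoint_empty_left _
  have h4 : ∀ y, y ∉ R₀ → r y ≤ v y (A₀ y) := by
    intro y hy
    have : ¬ 0 < r y := fun h => hy (Finset.mem_filter.2 ⟨Finset.mem_univ y, h⟩)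
    have hr0 : r y = 0 := le_antisymm (not_lt.1 this) zero_le
    rw [hr0]
    exact zero_le
  have h5 : ∀ y, y ∉ R₀ → ∀ x ∈ R₀, v x (A₀ y) < r x := by
    intro y _ x hx
    show v x ∅ < r x
    rw [hzero x]
    exact h2 x hx
  have h6 : ∀ y, y ∉ R₀ → ∀ W, W ⊂ A₀ y →
      (∀ x ∈ R₀, v x W < r x) ∧ (∀ z, z ∉ R₀ → v z W ≤ v z (A₀ z)) := by
    intro y _ W hW
    exact absurd hW (Finset.not_ssubset_empty W)
  obtain ⟨B, hB1, hB2, _, hB4⟩ :=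
    main v r hRSF
      (R₀.card * ((Sval v).card + 1) +
        ((Sval v).filter (fun s => (∑ i, v i (A₀ i)) < s)).card)
      R₀ A₀ le_rfl h1 h2 h3 h4 h5 h6
  exact ⟨B, hB1, hB2, hB4⟩
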